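/- Variance bound on the SCDF-SVRG update direction (Corollary 1, with explicit provable constants): Suppose Assumption 2 holds, let x* ∈ ℝ^N and β_i^* := −(∂G(x*))^T∇F_i(G(x*)). Then for all x, x̃ ∈ ℝ^N, every integer A ≥ 1, and every family of vectors β_1,…,β_n ∈ ℝ^N, E_{σ,i}[ ‖(∂Ĝ(σ,x,x̃))^T ∇F_i(Ĝ(σ,x,x̃)) + β_i‖² ] ≤ 8(B_F² L_G² + B_G⁴ L_F²)·((1/A)‖x − x̃‖² + ‖x − x*‖²) + 2·(1/n)∑_{i=1}^n ‖β_i − β_i^*‖². -/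

import Mathlib

noncomputable section

open Finset
open scoped RealInnerProductSpace

abbrev Euc (N : ℕ) := EuclideanSpace ℝ (Fin N)

/-- Frobenius norm of a linear map between Euclidean spaces: the square root of the
sum of the squared norms of the columns. -/
def frobNorm {N M : ℕ} (T : Euc N →L[ℝ] Euc M) : ℝ :=
  Real.sqrt (∑ j : Fin N, ‖T (EuclideanSpace.single j 1)‖ ^ 2)

/-- The averaged inner function `G = (1/m) ∑ⱼ Gⱼ`. -/
def Gbar {m N M : ℕ} (G : Fin m → Euc N → Euc M) (x : Euc N) : Euc M :=
  (m : ℝ)⁻¹ • ∑ j, G j x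

/-- The averaged Jacobian `∂G = (1/m) ∑ⱼ ∂Gⱼ`. -/
def Jbar {m N M : ℕ} (J : Fin m → Euc N → (Euc N →L[ℝ] Euc M)) (x : Euc N) :
    Euc N →L[ℝ] Euc M :=
  (m : ℝ)⁻¹ • ∑ j, J j x

/-- `Tᵀ v`: the transpose (adjoint) of `T` applied to `v`. -/
def transApp {N M : ℕ} (T : Euc N →L[ℝ] Euc M) (v : Euc M) : Euc N :=
  ContinuousLinearMap.adjoint T v

/-- Assumption 2 of the paper: bounded gradients, Lipschitz gradients, bounded
Jacobians (Frobenius norm), Lipschitz inner functions and Lipschitz Jacobians. -/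
def Assumption2 {n m N M : ℕ} (G : Fin m → Euc N → Euc M)
    (J : Fin m → Euc N → (Euc N →L[ℝ] Euc M))
    (gradF : Fin n → Euc M → Euc M) (BF LF BG LG : ℝ) : Prop :=
  (∀ i y, ‖gradF i y‖ ≤ BF) ∧
  (∀ i y y', ‖gradF i y - gradF i y'‖ ≤ LF * ‖y - y'‖) ∧
  (∀ j x, frobNorm (J j x) ≤ BG) ∧
  (∀ j x x', ‖G j x - G j x'‖ ≤ BG * ‖x - x'‖) ∧
  (∀ j x x', frobNorm (J j x - J j x') ≤ LG * ‖x - x'‖)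

/-- Continuous differentiability of the data, with the prescribed Jacobians and
gradients. -/
def SmoothData {n m N M : ℕ} (Fi : Fin n → Euc M → ℝ) (G : Fin m → Euc N → Euc M)
    (J : Fin m → Euc N → (Euc N →L[ℝ] Euc M)) (gradF : Fin n → Euc M → Euc M) : Prop :=
  (∀ j x, HasFDerivAt (G j) (J j x) x) ∧ (∀ j, Continuous (J j)) ∧
  (∀ i y, HasGradientAt (Fi i) (gradF i y) y) ∧ (∀ i, Continuous (gradF i))

/-- Uniform average over all tuples `σ ∈ {1,…,m}^A`. -/
def Esig {m A : ℕ} (f : (Fin A → Fin m) → ℝ) : ℝ :=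
  (∑ σ : Fin A → Fin m, f σ) / (m ^ A : ℝ)

/-- The SVRG estimator `Ĝ(σ,x,x̃)` of the inner function. -/
def GhatSVRG {m N M : ℕ} (G : Fin m → Euc N → Euc M) {A : ℕ}
    (σ : Fin A → Fin m) (x xt : Euc N) : Euc M :=
  (A : ℝ)⁻¹ • ∑ l, (G (σ l) x - G (σ l) xt) + Gbar G xt

/-- The SVRG estimator `∂Ĝ(σ,x,x̃)` of the Jacobian. -/
def JhatSVRG {m N M : ℕ} (J : Fin m → Euc N → (Euc N →L[ℝ] Euc M)) {A : ℕ}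
    (σ : Fin A → Fin m) (x xt : Euc N) : Euc N →L[ℝ] Euc M :=
  (A : ℝ)⁻¹ • ∑ l, (J (σ l) x - J (σ l) xt) + Jbar J xt



lemma sum_pi_succ {m A : ℕ} {E : Type*} [AddCommMonoid E] (F : (Fin (A+1) → Fin m) → E) :
    ∑ σ, F σ = ∑ j : Fin m, ∑ σ' : Fin A → Fin m, F (Fin.cons j σ') := by
  have h1 : ∑ σ, F σ = ∑ p : Fin m × (Fin A → Fin m), F (Fin.cons p.1 p.2) :=
    (Fintype.sum_equiv (Fin.consEquiv fun _ => Fin m) _ _ (fun p => rfl)).symm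
  rw [h1, Fintype.sum_prod_type]

section AuxIP
variable {E : Type*} [NormedAddCommGroup E] [InnerProductSpace ℝ E]

lemma sq_norm_add_le' (a b : E) : ‖a + b‖ ^ 2 ≤ 2 * ‖a‖ ^ 2 + 2 * ‖b‖ ^ 2 := by
  have h := norm_add_le a b
  nlinarith [mul_le_mul h h (norm_nonneg (a + b)) (by positivity), sq_nonneg (‖a‖ - ‖b‖)]

lemma key_sum {m : ℕ} (Z : Fin m → E) (hZ : ∑ j, Z j = 0) :
    ∀ (A : ℕ) (c : E), ∑ σ : Fin A → Fin m, ‖(∑ l, Z (σ l)) + c‖ ^ 2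
      = (A : ℝ) * (m : ℝ) ^ (A - 1) * (∑ j, ‖Z j‖ ^ 2) + (m : ℝ) ^ A * ‖c‖ ^ 2 := by
  intro A
  induction A with
  | zero =>
      intro c
      simp [Finset.sum_const, Finset.card_univ]
  | succ A ih =>
      intro c
      have hstep : ∀ j : Fin m, ∑ σ' : Fin A → Fin m, ‖(Z j + ∑ l, Z (σ' l)) + c‖ ^ 2
          = (A : ℝ) * (m : ℝ) ^ (A - 1) * (∑ k, ‖Z k‖ ^ 2)
            + (m : ℝ) ^ A * ‖Z j + c‖ ^ 2 := by
        intro j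
        rw [← ih (Z j + c)]
        refine Finset.sum_congr rfl fun σ' _ => ?_
        congr 2
        abel
      calc ∑ σ : Fin (A + 1) → Fin m, ‖(∑ l, Z (σ l)) + c‖ ^ 2
          = ∑ j : Fin m, ∑ σ' : Fin A → Fin m,
              ‖(∑ l : Fin (A + 1), Z ((Fin.cons j σ' : Fin (A+1) → Fin m) l)) + c‖ ^ 2 :=
            sum_pi_succ (fun σ : Fin (A+1) → Fin m => ‖(∑ l, Z (σ l)) + c‖ ^ 2)
        _ = ∑ j : Fin m, ∑ σ' : Fin A → Fin m, ‖(Z j + ∑ l, Z (σ' l)) + c‖ ^ 2 := by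
            refine Finset.sum_congr rfl fun j _ => Finset.sum_congr rfl fun σ' _ => ?_
            rw [Fin.sum_univ_succ]
            simp [Fin.cons_zero, Fin.cons_succ]
        _ = ∑ j : Fin m, ((A : ℝ) * (m : ℝ) ^ (A - 1) * (∑ k, ‖Z k‖ ^ 2)
              + (m : ℝ) ^ A * ‖Z j + c‖ ^ 2) := Finset.sum_congr rfl fun j _ => hstep j
        _ = (m : ℝ) * ((A : ℝ) * (m : ℝ) ^ (A - 1) * (∑ k, ‖Z k‖ ^ 2))
              + (m : ℝ) ^ A * (∑ j, ‖Z j + c‖ ^ 2) := by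
            rw [Finset.sum_add_distrib, Finset.sum_const, Finset.card_univ, ← Finset.mul_sum]
            simp only [Fintype.card_fin, nsmul_eq_mul]
        _ = (m : ℝ) * ((A : ℝ) * (m : ℝ) ^ (A - 1) * (∑ k, ‖Z k‖ ^ 2))
              + (m : ℝ) ^ A * ((∑ j, ‖Z j‖ ^ 2) + (m : ℝ) * ‖c‖ ^ 2) := by
            congr 2
            simp only [norm_add_sq_real]
            rw [Finset.sum_add_distrib, Finset.sum_add_distrib, ← Finset.mul_sum,
              ← sum_inner, hZ, inner_zero_left, Finset.sum_const, Finset.card_univ]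
            simp only [Fintype.card_fin, nsmul_eq_mul, mul_zero]
            ring
        _ = ((A + 1 : ℕ) : ℝ) * (m : ℝ) ^ (A + 1 - 1) * (∑ j, ‖Z j‖ ^ 2)
              + (m : ℝ) ^ (A + 1) * ‖c‖ ^ 2 := by
            have hp : (m : ℝ) * ((A : ℝ) * (m : ℝ) ^ (A - 1)) = (A : ℝ) * (m : ℝ) ^ A := by
              cases A with
              | zero => simp
              | succ B => simp only [Nat.succ_sub_one, pow_succ]; ring
            generalize (∑ j : Fin m, ‖Z j‖ ^ 2) = SZ
            simp only [Nat.add_sub_cancel, pow_succ]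
            push_cast
            linear_combination SZ * hp

lemma var_le_second_moment {m : ℕ} (hm : 0 < m) (Y : Fin m → E) :
    ∑ j, ‖Y j - (m : ℝ)⁻¹ • ∑ k, Y k‖ ^ 2 ≤ ∑ j, ‖Y j‖ ^ 2 := by
  have hmne : (m : ℝ) ≠ 0 := Nat.cast_ne_zero.mpr hm.ne'
  set Yb : E := (m : ℝ)⁻¹ • ∑ k, Y k with hYb
  have hsum : ∑ k, Y k = (m : ℝ) • Yb := by
    rw [hYb, smul_smul, mul_inv_cancel₀ hmne, one_smul]
  have expand : ∑ j, ‖Y j - Yb‖ ^ 2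
      = (∑ j, ‖Y j‖ ^ 2) - (m : ℝ) * ‖Yb‖ ^ 2 := by
    simp only [norm_sub_sq_real]
    rw [Finset.sum_add_distrib, Finset.sum_sub_distrib, ← Finset.mul_sum, ← sum_inner,
      hsum, real_inner_smul_left, real_inner_self_eq_norm_sq,
      Finset.sum_const, Finset.card_univ]
    simp only [Fintype.card_fin, nsmul_eq_mul]
    ring
  rw [expand]
  have hmpos : (0 : ℝ) < m := by exact_mod_cast hm
  nlinarith [sq_nonneg ‖Yb‖]

lemma avg_norm_le {m : ℕ} (hm : 0 < m) (Y : Fin m → E) (b : ℝ)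
    (hb : ∀ j, ‖Y j‖ ≤ b) : ‖(m : ℝ)⁻¹ • ∑ j, Y j‖ ≤ b := by
  have hmpos : (0 : ℝ) < m := by exact_mod_cast hm
  have h : ‖∑ j, Y j‖ ≤ (m : ℝ) * b := by
    calc ‖∑ j, Y j‖ ≤ ∑ j, ‖Y j‖ := norm_sum_le _ _
      _ ≤ ∑ _j : Fin m, b := Finset.sum_le_sum fun j _ => hb j
      _ = (m : ℝ) * b := by
          rw [Finset.sum_const, Finset.card_univ]
          simp only [Fintype.card_fin, nsmul_eq_mul]
  calc ‖(m : ℝ)⁻¹ • ∑ j, Y j‖ = (m : ℝ)⁻¹ * ‖∑ j, Y j‖ := by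
        rw [norm_smul, Real.norm_eq_abs, abs_of_nonneg (by positivity)]
    _ ≤ (m : ℝ)⁻¹ * ((m : ℝ) * b) := by
        exact mul_le_mul_of_nonneg_left h (by positivity)
    _ = b := by field_simp

end AuxIP

section MomentLemma
variable {E : Type*} [NormedAddCommGroup E] [InnerProductSpace ℝ E]

lemma svrg_moment {N m A : ℕ} (hm : 0 < m) (hA : 0 < A)
    (g : Fin m → Euc N → E) (L : ℝ) (hL : 0 ≤ L)
    (hLip : ∀ j (a b : Euc N), ‖g j a - g j b‖ ≤ L * ‖a - b‖)
    (x xt xs : Euc N) :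
    Esig (fun σ : Fin A → Fin m =>
      ‖((A : ℝ)⁻¹ • ∑ l, (g (σ l) x - g (σ l) xt) + (m : ℝ)⁻¹ • ∑ j, g j xt)
        - (m : ℝ)⁻¹ • ∑ j, g j xs‖ ^ 2)
      ≤ L ^ 2 * ((1 / (A : ℝ)) * ‖x - xt‖ ^ 2 + ‖x - xs‖ ^ 2) := by
  have hmR : (0:ℝ) < m := by exact_mod_cast hm
  have hAR : (0:ℝ) < A := by exact_mod_cast hA
  set Y : Fin m → E := fun j => g j x - g j xt with hY
  set Yb : E := (m:ℝ)⁻¹ • ∑ k, Y k with hYb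
  set Z : Fin m → E := fun j => Y j - Yb with hZdef
  set c : E := (m:ℝ)⁻¹ • ∑ j, g j x - (m:ℝ)⁻¹ • ∑ j, g j xs with hc
  have hZsum : ∑ j, Z j = 0 := by
    simp only [hZdef, Finset.sum_sub_distrib, Finset.sum_const, Finset.card_univ,
      Fintype.card_fin]
    rw [← Nat.cast_smul_eq_nsmul ℝ, hYb, smul_smul, mul_inv_cancel₀ hmR.ne', one_smul, sub_self]
  have hrw : ∀ σ : Fin A → Fin m,
      ((A : ℝ)⁻¹ • ∑ l, (g (σ l) x - g (σ l) xt) + (m : ℝ)⁻¹ • ∑ j, g j xt)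
        - (m : ℝ)⁻¹ • ∑ j, g j xs
      = (A:ℝ)⁻¹ • ((∑ l, Z (σ l)) + (A:ℝ) • c) := by
    intro σ
    have h1 : ∑ l, Z (σ l) = (∑ l, Y (σ l)) - (A:ℝ) • Yb := by
      simp only [hZdef, Finset.sum_sub_distrib, Finset.sum_const, Finset.card_univ,
        Fintype.card_fin]
      rw [← Nat.cast_smul_eq_nsmul ℝ]
    rw [h1, hYb, hc]
    simp only [hY, Finset.sum_sub_distrib]
    match_scalars <;> (field_simp; try ring)
  have hks := key_sum Z hZsum A ((A:ℝ) • c)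
  have hsum2 : (∑ σ : Fin A → Fin m,
      ‖((A : ℝ)⁻¹ • ∑ l, (g (σ l) x - g (σ l) xt) + (m : ℝ)⁻¹ • ∑ j, g j xt)
        - (m : ℝ)⁻¹ • ∑ j, g j xs‖ ^ 2)
      = ((A:ℝ)⁻¹)^2 * ((A : ℝ) * (m : ℝ) ^ (A - 1) * (∑ j, ‖Z j‖ ^ 2)
          + (m : ℝ) ^ A * ((A:ℝ)^2 * ‖c‖ ^ 2)) := by
    calc (∑ σ : Fin A → Fin m,
        ‖((A : ℝ)⁻¹ • ∑ l, (g (σ l) x - g (σ l) xt) + (m : ℝ)⁻¹ • ∑ j, g j xt)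
          - (m : ℝ)⁻¹ • ∑ j, g j xs‖ ^ 2)
        = ∑ σ : Fin A → Fin m, ((A:ℝ)⁻¹)^2 * ‖(∑ l, Z (σ l)) + (A:ℝ) • c‖ ^ 2 :=
          Finset.sum_congr rfl fun σ _ => by
            rw [hrw σ, norm_smul, mul_pow, Real.norm_eq_abs, abs_of_nonneg (by positivity)]
      _ = ((A:ℝ)⁻¹)^2 * ∑ σ : Fin A → Fin m, ‖(∑ l, Z (σ l)) + (A:ℝ) • c‖ ^ 2 := by
          rw [Finset.mul_sum]
      _ = ((A:ℝ)⁻¹)^2 * ((A : ℝ) * (m : ℝ) ^ (A - 1) * (∑ j, ‖Z j‖ ^ 2)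
            + (m : ℝ) ^ A * ((A:ℝ)^2 * ‖c‖ ^ 2)) := by
          rw [hks, norm_smul, mul_pow, Real.norm_eq_abs, abs_of_nonneg hAR.le]
  have hSZ : (∑ j, ‖Z j‖ ^ 2) ≤ (m:ℝ) * (L^2 * ‖x - xt‖^2) := by
    calc (∑ j, ‖Z j‖ ^ 2) ≤ ∑ j, ‖Y j‖ ^ 2 := by
          simpa only [hZdef, hYb] using var_le_second_moment hm Y
      _ ≤ ∑ _j : Fin m, L^2 * ‖x - xt‖^2 := Finset.sum_le_sum fun j _ => by
          have h2 : ‖Y j‖ ≤ L * ‖x - xt‖ := by simpa [hY] using hLip j x xt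
          nlinarith [norm_nonneg (Y j), norm_nonneg (x - xt)]
      _ = (m:ℝ) * (L^2 * ‖x - xt‖^2) := by
          rw [Finset.sum_const, Finset.card_univ]
          simp only [Fintype.card_fin, nsmul_eq_mul]
  have hc2 : ‖c‖^2 ≤ L^2 * ‖x - xs‖^2 := by
    have hcn : ‖c‖ ≤ L * ‖x - xs‖ := by
      have hce : c = (m:ℝ)⁻¹ • ∑ j, (g j x - g j xs) := by
        rw [hc, Finset.sum_sub_distrib, smul_sub]
      rw [hce]
      exact avg_norm_le hm _ _ (fun j => hLip j x xs)
    nlinarith [norm_nonneg c, norm_nonneg (x - xs)]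
  have hmA : (m:ℝ)^A = (m:ℝ)^(A-1) * (m:ℝ) := by
    rw [← pow_succ, Nat.sub_add_cancel hA]
  have hPpos : (0:ℝ) < (m:ℝ)^(A-1) := pow_pos hmR _
  simp only [Esig]
  rw [hsum2]
  generalize hSZg : (∑ j : Fin m, ‖Z j‖ ^ 2) = SZ at hSZ ⊢
  have hSZ0 : 0 ≤ SZ := by
    rw [← hSZg]; positivity
  rw [hmA]
  have key : ((A:ℝ)⁻¹)^2 * ((A : ℝ) * (m : ℝ) ^ (A - 1) * SZ
        + ((m : ℝ)^(A-1) * (m:ℝ)) * ((A:ℝ)^2 * ‖c‖ ^ 2)) / ((m : ℝ)^(A-1) * (m:ℝ))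
      = SZ / ((A:ℝ) * (m:ℝ)) + ‖c‖^2 := by
    field_simp
  rw [key]
  calc SZ / ((A:ℝ) * (m:ℝ)) + ‖c‖^2
      ≤ ((m:ℝ) * (L^2 * ‖x - xt‖^2)) / ((A:ℝ) * (m:ℝ)) + L^2 * ‖x - xs‖^2 := by
        gcongr
    _ = L ^ 2 * ((1 / (A : ℝ)) * ‖x - xt‖ ^ 2 + ‖x - xs‖ ^ 2) := by
        field_simp

end MomentLemma

def psiL (N M : ℕ) : (Euc N →L[ℝ] Euc M) →ₗ[ℝ] PiLp 2 (fun _ : Fin N => Euc M) where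
  toFun T := WithLp.toLp 2 (fun j => T (EuclideanSpace.single j 1))
  map_add' S T := rfl
  map_smul' r T := rfl

lemma frob_eq_psi {N M : ℕ} (T : Euc N →L[ℝ] Euc M) : frobNorm T = ‖psiL N M T‖ := by
  rw [frobNorm,
    show (∑ j : Fin N, ‖T (EuclideanSpace.single j 1)‖ ^ 2) = ‖psiL N M T‖ ^ 2 from
      (PiLp.norm_sq_eq_of_L2 _ (psiL N M T)).symm,
    Real.sqrt_sq (norm_nonneg _)]

lemma frobNorm_nonneg {N M : ℕ} (T : Euc N →L[ℝ] Euc M) : 0 ≤ frobNorm T :=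
  Real.sqrt_nonneg _

lemma euc_decomp {N : ℕ} (v : Euc N) : v = ∑ i, v i • EuclideanSpace.single i (1:ℝ) := by
  have h := (EuclideanSpace.basisFun (Fin N) ℝ).sum_repr v
  simp only [EuclideanSpace.basisFun_repr, EuclideanSpace.basisFun_apply] at h
  exact h.symm

lemma opNorm_le_frob {N M : ℕ} (T : Euc N →L[ℝ] Euc M) : ‖T‖ ≤ frobNorm T := by
  refine ContinuousLinearMap.opNorm_le_bound _ (frobNorm_nonneg T) (fun v => ?_)
  have hv : T v = ∑ i, v i • T (EuclideanSpace.single i (1:ℝ)) := by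
    conv_lhs => rw [euc_decomp v]
    rw [map_sum]
    simp only [map_smul]
  rw [hv]
  have hCS := Finset.sum_mul_sq_le_sq_mul_sq Finset.univ (fun i => |v i|)
    (fun i => ‖T (EuclideanSpace.single i (1:ℝ))‖)
  have hpos1 : (0:ℝ) ≤ ∑ i, ‖v i‖ ^ 2 := Finset.sum_nonneg fun i _ => sq_nonneg _
  have h1 : ∑ i, |v i| ^ 2 = ‖v‖ ^ 2 := by
    rw [EuclideanSpace.norm_eq, Real.sq_sqrt hpos1]
    simp [Real.norm_eq_abs]
  have hpos2 : (0:ℝ) ≤ ∑ i, ‖T (EuclideanSpace.single i (1:ℝ))‖ ^ 2 :=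
    Finset.sum_nonneg fun i _ => sq_nonneg _
  have h2 : (frobNorm T) ^ 2 = ∑ i, ‖T (EuclideanSpace.single i (1:ℝ))‖ ^ 2 := by
    rw [frobNorm]
    exact Real.sq_sqrt hpos2
  have h3 : ‖∑ i, v i • T (EuclideanSpace.single i (1:ℝ))‖
      ≤ ∑ i, |v i| * ‖T (EuclideanSpace.single i (1:ℝ))‖ := by
    refine (norm_sum_le _ _).trans ?_
    refine Finset.sum_le_sum fun i _ => ?_
    rw [norm_smul, Real.norm_eq_abs]
  refine h3.trans ?_
  have h4 : (∑ i, |v i| * ‖T (EuclideanSpace.single i (1:ℝ))‖) ^ 2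
      ≤ (frobNorm T * ‖v‖) ^ 2 := by
    calc (∑ i, |v i| * ‖T (EuclideanSpace.single i (1:ℝ))‖) ^ 2
        ≤ (∑ i, |v i| ^ 2) * ∑ i, ‖T (EuclideanSpace.single i (1:ℝ))‖ ^ 2 := hCS
      _ = (frobNorm T * ‖v‖) ^ 2 := by rw [h1, ← h2]; ring
  have h5 : 0 ≤ ∑ i, |v i| * ‖T (EuclideanSpace.single i (1:ℝ))‖ :=
    Finset.sum_nonneg fun i _ => mul_nonneg (abs_nonneg _) (norm_nonneg _)
  nlinarith [mul_nonneg (frobNorm_nonneg T) (norm_nonneg v)]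

lemma transApp_le {N M : ℕ} (T : Euc N →L[ℝ] Euc M) (v : Euc M) :
    ‖transApp T v‖ ≤ frobNorm T * ‖v‖ := by
  calc ‖transApp T v‖ ≤ ‖ContinuousLinearMap.adjoint T‖ * ‖v‖ :=
        (ContinuousLinearMap.adjoint T).le_opNorm v
    _ = ‖T‖ * ‖v‖ := by rw [LinearIsometryEquiv.norm_map]
    _ ≤ frobNorm T * ‖v‖ := mul_le_mul_of_nonneg_right (opNorm_le_frob T) (norm_nonneg v)

lemma Esig_mono {m A : ℕ} (hm : 0 < m) {f g : (Fin A → Fin m) → ℝ}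
    (h : ∀ σ, f σ ≤ g σ) : Esig f ≤ Esig g := by
  have hpos : (0:ℝ) < (m:ℝ) ^ A := pow_pos (by exact_mod_cast hm) A
  simp only [Esig]
  exact (div_le_div_iff_of_pos_right hpos).mpr (Finset.sum_le_sum fun σ _ => h σ)

lemma Esig_affine {m A : ℕ} (hm : 0 < m) (a b d : ℝ) (u v : (Fin A → Fin m) → ℝ) :
    Esig (fun σ => a * u σ + b * v σ + d) = a * Esig u + b * Esig v + d := by
  have hpow : ((m:ℝ)) ^ A ≠ 0 := (pow_pos (by exact_mod_cast hm) A).ne'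
  simp only [Esig]
  rw [Finset.sum_add_distrib, Finset.sum_add_distrib, ← Finset.mul_sum, ← Finset.mul_sum,
    Finset.sum_const, Finset.card_univ, Fintype.card_fun, Fintype.card_fin, Fintype.card_fin, nsmul_eq_mul,
    Nat.cast_pow]
  field_simp

set_option maxHeartbeats 1000000 in
/-- Corollary 1 (explicit constants): variance bound on the SCDF-SVRG update direction. -/
theorem svrg_update_direction_variance_bound
    {n m N M A : ℕ} (hn : 0 < n) (hm : 0 < m) (hA : 0 < A)
    (BF LF BG LG : ℝ) (hBF : 0 < BF) (hLF : 0 < LF) (hBG : 0 < BG) (hLG : 0 < LG)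
    (Fi : Fin n → Euc M → ℝ) (G : Fin m → Euc N → Euc M)
    (J : Fin m → Euc N → (Euc N →L[ℝ] Euc M)) (gradF : Fin n → Euc M → Euc M)
    (hsm : SmoothData Fi G J gradF)
    (hA2 : Assumption2 G J gradF BF LF BG LG)
    (xstar : Euc N) (x xt : Euc N) (β : Fin n → Euc N) :
    (n : ℝ)⁻¹ * ∑ i, Esig (fun σ : Fin A → Fin m =>
        ‖transApp (JhatSVRG J σ x xt) (gradF i (GhatSVRG G σ x xt)) + β i‖ ^ 2)
      ≤ 8 * (BF ^ 2 * LG ^ 2 + BG ^ 4 * LF ^ 2) *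
          ((1 / (A : ℝ)) * ‖x - xt‖ ^ 2 + ‖x - xstar‖ ^ 2) +
        2 * ((n : ℝ)⁻¹ * ∑ i,
          ‖β i - (-(transApp (Jbar J xstar) (gradF i (Gbar G xstar))))‖ ^ 2) := by
  obtain ⟨hBFb, hLFlip, hJb, hGlip, hJlip⟩ := hA2
  set S : ℝ := (1 / (A : ℝ)) * ‖x - xt‖ ^ 2 + ‖x - xstar‖ ^ 2 with hS
  have hS0 : 0 ≤ S := by rw [hS]; positivity
  set K : ℝ := BF ^ 2 * LG ^ 2 + BG ^ 4 * LF ^ 2 with hK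
  have hK0 : 0 ≤ K := by rw [hK]; positivity
  clear_value S K
  -- second moment bound for Ĝ
  have hbG : Esig (fun σ : Fin A → Fin m => ‖GhatSVRG G σ x xt - Gbar G xstar‖ ^ 2)
      ≤ BG ^ 2 * S := by
    have h := svrg_moment hm hA G BG hBG.le hGlip x xt xstar
    have hfunG : (fun σ : Fin A → Fin m => ‖GhatSVRG G σ x xt - Gbar G xstar‖ ^ 2)
        = (fun σ : Fin A → Fin m =>
          ‖((A : ℝ)⁻¹ • ∑ l, (G (σ l) x - G (σ l) xt) + (m : ℝ)⁻¹ • ∑ j, G j xt)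
            - (m : ℝ)⁻¹ • ∑ j, G j xstar‖ ^ 2) := by
      funext σ
      simp only [GhatSVRG, Gbar]
    rw [hfunG, hS]
    exact h
  -- second moment bound for ∂Ĝ (through psi)
  have hpsilip : ∀ (j : Fin m) (a b : Euc N),
      ‖psiL N M (J j a) - psiL N M (J j b)‖ ≤ LG * ‖a - b‖ := fun j a b => by
    rw [← map_sub, ← frob_eq_psi]
    exact hJlip j a b
  have hbJ : Esig (fun σ : Fin A → Fin m =>
      ‖psiL N M (JhatSVRG J σ x xt) - psiL N M (Jbar J xstar)‖ ^ 2) ≤ LG ^ 2 * S := by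
    have h := svrg_moment hm hA (fun j y => psiL N M (J j y)) LG hLG.le hpsilip x xt xstar
    have hfun : (fun σ : Fin A → Fin m =>
        ‖psiL N M (JhatSVRG J σ x xt) - psiL N M (Jbar J xstar)‖ ^ 2)
        = (fun σ : Fin A → Fin m =>
        ‖((A : ℝ)⁻¹ • ∑ l, (psiL N M (J (σ l) x) - psiL N M (J (σ l) xt))
            + (m : ℝ)⁻¹ • ∑ j, psiL N M (J j xt))
          - (m : ℝ)⁻¹ • ∑ j, psiL N M (J j xstar)‖ ^ 2) := by
      funext σ
      simp only [JhatSVRG, Jbar, map_add, map_smul, map_sum, map_sub]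
    rw [hfun, hS]
    exact h
  -- bound on the Frobenius norm of the averaged Jacobian at xstar
  have hJsb : frobNorm (Jbar J xstar) ≤ BG := by
    rw [frob_eq_psi]
    have hpsibar : psiL N M (Jbar J xstar) = (m:ℝ)⁻¹ • ∑ j, psiL N M (J j xstar) := by
      simp [Jbar, map_smul, map_sum]
    rw [hpsibar]
    exact avg_norm_le hm _ _ (fun j => by rw [← frob_eq_psi]; exact hJb j xstar)
  -- pointwise bound
  have hpt : ∀ (i : Fin n) (σ : Fin A → Fin m),
      ‖transApp (JhatSVRG J σ x xt) (gradF i (GhatSVRG G σ x xt)) + β i‖ ^ 2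
      ≤ 4 * BF ^ 2 * ‖psiL N M (JhatSVRG J σ x xt) - psiL N M (Jbar J xstar)‖ ^ 2
        + (4 * BG ^ 2 * LF ^ 2) * ‖GhatSVRG G σ x xt - Gbar G xstar‖ ^ 2
        + 2 * ‖β i - (-(transApp (Jbar J xstar) (gradF i (Gbar G xstar))))‖ ^ 2 := by
    intro i σ
    set Jh := JhatSVRG J σ x xt
    set Gh := GhatSVRG G σ x xt
    set Js := Jbar J xstar
    set Gs := Gbar G xstar
    set u := gradF i Gh
    set us := gradF i Gs
    set Hst := transApp Js us with hHst
    have hXdecomp : transApp Jh u - Hst = transApp (Jh - Js) u + transApp Js (u - us) := by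
      simp only [hHst, transApp, map_sub, ContinuousLinearMap.sub_apply]
      abel
    have hX1 : ‖transApp (Jh - Js) u‖ ≤ ‖psiL N M Jh - psiL N M Js‖ * BF := by
      calc ‖transApp (Jh - Js) u‖ ≤ frobNorm (Jh - Js) * ‖u‖ := transApp_le _ _
        _ = ‖psiL N M Jh - psiL N M Js‖ * ‖u‖ := by rw [frob_eq_psi, map_sub]
        _ ≤ ‖psiL N M Jh - psiL N M Js‖ * BF :=
            mul_le_mul_of_nonneg_left (hBFb i Gh) (norm_nonneg _)
    have hX2 : ‖transApp Js (u - us)‖ ≤ BG * (LF * ‖Gh - Gs‖) := by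
      calc ‖transApp Js (u - us)‖ ≤ frobNorm Js * ‖u - us‖ := transApp_le _ _
        _ ≤ BG * (LF * ‖Gh - Gs‖) :=
            mul_le_mul hJsb (hLFlip i Gh Gs) (norm_nonneg _) hBG.le
    have hX : ‖transApp Jh u - Hst‖
        ≤ ‖psiL N M Jh - psiL N M Js‖ * BF + BG * (LF * ‖Gh - Gs‖) := by
      rw [hXdecomp]
      exact (norm_add_le _ _).trans (add_le_add hX1 hX2)
    have h0 : transApp Jh u + β i = (transApp Jh u - Hst) + (β i - -Hst) := by abel
    rw [h0]
    have h1 := sq_norm_add_le' (transApp Jh u - Hst) (β i - -Hst)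
    have h2 := mul_le_mul hX hX (norm_nonneg _) (by positivity)
    nlinarith [sq_nonneg (‖psiL N M Jh - psiL N M Js‖ * BF - BG * (LF * ‖Gh - Gs‖)),
      norm_nonneg (transApp Jh u - Hst)]
  -- per-i bound on the expectation
  have hEi : ∀ i : Fin n,
      Esig (fun σ : Fin A → Fin m =>
        ‖transApp (JhatSVRG J σ x xt) (gradF i (GhatSVRG G σ x xt)) + β i‖ ^ 2)
      ≤ 4 * K * S
        + 2 * ‖β i - (-(transApp (Jbar J xstar) (gradF i (Gbar G xstar))))‖ ^ 2 := by
    intro i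
    calc Esig (fun σ : Fin A → Fin m =>
          ‖transApp (JhatSVRG J σ x xt) (gradF i (GhatSVRG G σ x xt)) + β i‖ ^ 2)
        ≤ Esig (fun σ : Fin A → Fin m =>
          (4 * BF ^ 2) * ‖psiL N M (JhatSVRG J σ x xt) - psiL N M (Jbar J xstar)‖ ^ 2
          + (4 * BG ^ 2 * LF ^ 2) * ‖GhatSVRG G σ x xt - Gbar G xstar‖ ^ 2
          + 2 * ‖β i - (-(transApp (Jbar J xstar) (gradF i (Gbar G xstar))))‖ ^ 2) :=
          Esig_mono hm (fun σ => by
            have := hpt i σ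
            linarith)
      _ = (4 * BF ^ 2) * Esig (fun σ : Fin A → Fin m =>
            ‖psiL N M (JhatSVRG J σ x xt) - psiL N M (Jbar J xstar)‖ ^ 2)
          + (4 * BG ^ 2 * LF ^ 2) * Esig (fun σ : Fin A → Fin m =>
            ‖GhatSVRG G σ x xt - Gbar G xstar‖ ^ 2)
          + 2 * ‖β i - (-(transApp (Jbar J xstar) (gradF i (Gbar G xstar))))‖ ^ 2 :=
          Esig_affine hm _ _ _ _ _
      _ ≤ (4 * BF ^ 2) * (LG ^ 2 * S) + (4 * BG ^ 2 * LF ^ 2) * (BG ^ 2 * S)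
          + 2 * ‖β i - (-(transApp (Jbar J xstar) (gradF i (Gbar G xstar))))‖ ^ 2 := by
          have c1 := mul_le_mul_of_nonneg_left hbJ (by positivity : (0:ℝ) ≤ 4 * BF ^ 2)
          have c2 := mul_le_mul_of_nonneg_left hbG
            (by positivity : (0:ℝ) ≤ 4 * BG ^ 2 * LF ^ 2)
          linarith
      _ = 4 * K * S
          + 2 * ‖β i - (-(transApp (Jbar J xstar) (gradF i (Gbar G xstar))))‖ ^ 2 := by
          rw [hK]; ring
  -- averaging over i
  have hnne : (n:ℝ) ≠ 0 := Nat.cast_ne_zero.mpr hn.ne'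
  have harith : ∀ C E2 : ℝ, (n:ℝ)⁻¹ * ((n:ℝ) * C + 2 * E2) = C + 2 * ((n:ℝ)⁻¹ * E2) := by
    intro C E2
    field_simp
  calc (n : ℝ)⁻¹ * ∑ i, Esig (fun σ : Fin A → Fin m =>
        ‖transApp (JhatSVRG J σ x xt) (gradF i (GhatSVRG G σ x xt)) + β i‖ ^ 2)
      ≤ (n : ℝ)⁻¹ * ∑ i, (4 * K * S
          + 2 * ‖β i - (-(transApp (Jbar J xstar) (gradF i (Gbar G xstar))))‖ ^ 2) :=
        mul_le_mul_of_nonneg_left (Finset.sum_le_sum fun i _ => hEi i) (by positivity)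
    _ = 4 * K * S + 2 * ((n : ℝ)⁻¹ * ∑ i,
          ‖β i - (-(transApp (Jbar J xstar) (gradF i (Gbar G xstar))))‖ ^ 2) := by
        rw [Finset.sum_add_distrib, Finset.sum_const, Finset.card_univ, Fintype.card_fin,
          nsmul_eq_mul, ← Finset.mul_sum, harith]
    _ ≤ 8 * K * S + 2 * ((n : ℝ)⁻¹ * ∑ i,
          ‖β i - (-(transApp (Jbar J xstar) (gradF i (Gbar G xstar))))‖ ^ 2) := by
        have hKS : 0 ≤ K * S := mul_nonneg hK0 hS0
        nlinarith [hKS]
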